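/- Let Ω ⊂ ℝ³ be a bounded measurable set and γ > 1. For any compact set K ⊂ (0,∞) there exists c₅ > 0 such that for every measurable ϱ : Ω → [0,∞) and r : Ω → K, ‖ϱ − r‖_{L^γ(Ω)}^γ ≤ c₅ (∫_Ω H(ϱ|r) dx)^{γ/2} + c₅ ∫_Ω H(ϱ|r) dx. -/

import Mathlib

open Real

lemma tangent_le_rpow {x y p : ℝ} (hx : 0 ≤ x) (hy : 0 < y) (hp : 1 ≤ p) :
    y ^ p + p * y ^ (p - 1) * (x - y) ≤ x ^ p := by
  have hs : (-1 : ℝ) ≤ x / y - 1 := by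
    have : 0 ≤ x / y := div_nonneg hx hy.le
    linarith
  have hb := one_add_mul_self_le_rpow_one_add hs hp
  have h1 : (1 : ℝ) + (x / y - 1) = x / y := by ring
  rw [h1] at hb
  have hyp : (0:ℝ) < y ^ p := rpow_pos_of_pos hy p
  have := mul_le_mul_of_nonneg_left hb hyp.le
  calc y ^ p + p * y ^ (p - 1) * (x - y)
      = y ^ p * (1 + p * (x / y - 1)) := by
        rw [rpow_sub_one hy.ne']; field_simp
    _ ≤ y ^ p * (x / y) ^ p := this
    _ = x ^ p := by rw [div_rpow hx hy.le]; field_simp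

lemma rpow_le_tangent {x y p : ℝ} (hx : 0 ≤ x) (hy : 0 < y) (hp0 : 0 ≤ p) (hp : p ≤ 1) :
    x ^ p ≤ y ^ p + p * y ^ (p - 1) * (x - y) := by
  have hs : (-1 : ℝ) ≤ x / y - 1 := by
    have : 0 ≤ x / y := div_nonneg hx hy.le
    linarith
  have hb := rpow_one_add_le_one_add_mul_self hs hp0 hp
  have h1 : (1 : ℝ) + (x / y - 1) = x / y := by ring
  rw [h1] at hb
  have hyp : (0:ℝ) < y ^ p := rpow_pos_of_pos hy p
  have := mul_le_mul_of_nonneg_left hb hyp.le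
  calc x ^ p = y ^ p * (x / y) ^ p := by rw [div_rpow hx hy.le]; field_simp
    _ ≤ y ^ p * (1 + p * (x / y - 1)) := this
    _ = y ^ p + p * y ^ (p - 1) * (x - y) := by
        rw [rpow_sub_one hy.ne']; field_simp

/-- Lower bound for differences of powers on a compact interval of `(0,∞)`. -/
lemma rpow_diff_lower {q a b x y : ℝ} (hq : 0 < q) (ha : 0 < a) (hay : a ≤ y)
    (hyx : y ≤ x) (hxb : x ≤ b) :
    q * min (a ^ (q - 1)) (b ^ (q - 1)) * (x - y) ≤ x ^ q - y ^ q := by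
  have hy : 0 < y := lt_of_lt_of_le ha hay
  have hx : 0 < x := lt_of_lt_of_le hy hyx
  rcases le_or_gt 1 q with h1 | h1
  · -- x^q ≥ y^q + q y^(q-1)(x-y), y^(q-1) ≥ a^(q-1)
    have ht := tangent_le_rpow hx.le hy h1
    have hm : a ^ (q - 1) ≤ y ^ (q - 1) := rpow_le_rpow ha.le hay (by linarith)
    have : min (a ^ (q - 1)) (b ^ (q - 1)) ≤ y ^ (q - 1) :=
      le_trans (min_le_left _ _) hm
    nlinarith [mul_le_mul_of_nonneg_right (mul_le_mul_of_nonneg_left this hq.le)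
      (sub_nonneg.mpr hyx)]
  · -- y^q ≤ x^q + q x^(q-1)(y-x)
    have ht := rpow_le_tangent hy.le hx hq.le h1.le
    have hm : b ^ (q - 1) ≤ x ^ (q - 1) := rpow_le_rpow_of_nonpos hx hxb (by linarith)
    have : min (a ^ (q - 1)) (b ^ (q - 1)) ≤ x ^ (q - 1) :=
      le_trans (min_le_right _ _) hm
    nlinarith [mul_le_mul_of_nonneg_right (mul_le_mul_of_nonneg_left this hq.le)
      (sub_nonneg.mpr hyx)]
lemma Emono_right {γ s t t' : ℝ} (hγ : 1 < γ) (hs : 0 < s) (h1 : s ≤ t') (h2 : t' ≤ t) :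
    t' ^ γ - s ^ γ - γ * s ^ (γ - 1) * (t' - s) ≤ t ^ γ - s ^ γ - γ * s ^ (γ - 1) * (t - s) := by
  have ht' : 0 < t' := lt_of_lt_of_le hs h1
  have htan := tangent_le_rpow (le_trans ht'.le h2) ht' hγ.le
  have hpow : s ^ (γ - 1) ≤ t' ^ (γ - 1) := rpow_le_rpow hs.le h1 (by linarith)
  nlinarith [mul_le_mul_of_nonneg_right (mul_le_mul_of_nonneg_left hpow (by linarith : (0:ℝ) ≤ γ)) (sub_nonneg.mpr h2)]

lemma Emono_left {γ s t t' : ℝ} (hγ : 1 < γ) (hs : 0 < s) (h0 : 0 ≤ t) (h1 : t ≤ t') (h2 : t' ≤ s) :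
    t' ^ γ - s ^ γ - γ * s ^ (γ - 1) * (t' - s) ≤ t ^ γ - s ^ γ - γ * s ^ (γ - 1) * (t - s) := by
  rcases eq_or_lt_of_le (le_trans h0 h1) with h | ht'
  · have ht : t = 0 := le_antisymm (h ▸ h1) h0
    rw [ht, ← h]
  · have htan := tangent_le_rpow h0 ht' hγ.le
    have hpow : t' ^ (γ - 1) ≤ s ^ (γ - 1) := rpow_le_rpow (le_of_lt ht') h2 (by linarith)
    nlinarith [mul_le_mul_of_nonneg_right (mul_le_mul_of_nonneg_left hpow (by linarith : (0:ℝ) ≤ γ)) (sub_nonneg.mpr h1)]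

lemma Estrong {γ m M s t : ℝ} (hγ : 1 < γ) (hm : 0 < m) (hms : m ≤ s) (hsM : s ≤ M)
    (h0 : 0 ≤ t) (hd : |t - s| ≤ m / 2) :
    γ * ((γ - 1) * min ((m/2) ^ (γ - 1 - 1)) ((M + m/2) ^ (γ - 1 - 1))) / 4 * (t - s)^2
      ≤ t ^ γ - s ^ γ - γ * s ^ (γ - 1) * (t - s) := by
  have hs : 0 < s := lt_of_lt_of_le hm hms
  have hq : 0 < γ - 1 := by linarith
  set κ₀ := (γ - 1) * min ((m/2) ^ (γ - 1 - 1)) ((M + m/2) ^ (γ - 1 - 1)) with hκ₀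
  set u := (t + s) / 2 with hu
  have habs := abs_le.mp hd
  have hupos : 0 < u := by rw [hu]; linarith
  have hidr : t - u = (t - s) / 2 := by rw [hu]; ring
  have hidl : u - s = (t - s) / 2 := by rw [hu]; ring
  have h1 := tangent_le_rpow h0 hupos hγ.le
  have h2 := tangent_le_rpow hupos.le hs hγ.le
  rw [hidr] at h1
  rw [hidl] at h2
  have h4 : γ * κ₀ * ((t-s)/2) * ((t-s)/2) ≤ γ * (u ^ (γ-1) - s ^ (γ-1)) * ((t-s)/2) := by
    rcases le_total s t with hst | hts
    · have hu1 : s ≤ u := by rw [hu]; linarith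
      have h3 : κ₀ * (u - s) ≤ u ^ (γ-1) - s ^ (γ-1) := by
        rw [hκ₀]
        exact rpow_diff_lower hq (by linarith) (by linarith) hu1 (by rw [hu]; linarith)
      rw [hidl] at h3
      have := mul_le_mul_of_nonneg_right (mul_le_mul_of_nonneg_left h3 (by linarith : (0:ℝ) ≤ γ))
        (by linarith : (0:ℝ) ≤ (t-s)/2)
      linarith
    · have hu2 : u ≤ s := by rw [hu]; linarith
      have h3 : κ₀ * (s - u) ≤ s ^ (γ-1) - u ^ (γ-1) := by
        rw [hκ₀]
        refine rpow_diff_lower hq (by linarith) ?_ hu2 (by linarith)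
        rw [hu]; linarith
      have hsu : s - u = (s - t) / 2 := by rw [hu]; ring
      rw [hsu] at h3
      have := mul_le_mul_of_nonneg_right (mul_le_mul_of_nonneg_left h3 (by linarith : (0:ℝ) ≤ γ))
        (by linarith : (0:ℝ) ≤ (s-t)/2)
      nlinarith [this]
  nlinarith [h1, h2, h4]

lemma Egrowth {γ M s t : ℝ} (hγ : 1 < γ) (hs : 0 < s) (hsM : s ≤ M)
    (hT1 : 2 * M + 2 ≤ t) (hT2 : (2*(M ^ γ + γ * M ^ (γ-1))) ^ (1/(γ-1)) ≤ t) :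
    t ^ γ / 2 ≤ t ^ γ - s ^ γ - γ * s ^ (γ - 1) * (t - s) := by
  have hM : 0 < M := lt_of_lt_of_le hs hsM
  have ht1 : (1:ℝ) ≤ t := by linarith
  have ht : 0 < t := by linarith
  have hsg : s ^ γ ≤ M ^ γ := rpow_le_rpow hs.le hsM (by linarith)
  have hsg1 : s ^ (γ-1) ≤ M ^ (γ-1) := rpow_le_rpow hs.le hsM (by linarith)
  have hts : 0 ≤ t - s := by linarith
  have hMg1 : 0 < M ^ (γ-1) := rpow_pos_of_pos hM _
  have hMg : 0 < M ^ γ := rpow_pos_of_pos hM _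
  have hlin : γ * s ^ (γ-1) * (t - s) ≤ γ * M ^ (γ-1) * t := by
    have h1 : γ * s ^ (γ-1) * (t - s) ≤ γ * M ^ (γ-1) * (t - s) :=
      mul_le_mul_of_nonneg_right (mul_le_mul_of_nonneg_left hsg1 (by linarith)) hts
    have h2 : γ * M ^ (γ-1) * (t - s) ≤ γ * M ^ (γ-1) * t :=
      mul_le_mul_of_nonneg_left (by linarith) (by positivity)
    linarith
  set A := 2*(M ^ γ + γ * M ^ (γ-1)) with hA
  have hApos : 0 < A := by positivity
  have htA : A ≤ t ^ (γ - 1) := by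
    have h := rpow_le_rpow (rpow_nonneg hApos.le _) hT2 (by linarith : (0:ℝ) ≤ γ - 1)
    rwa [← rpow_mul hApos.le, one_div, inv_mul_cancel₀ (by linarith : γ - 1 ≠ 0), rpow_one] at h
  have htg : t ^ γ = t ^ (γ-1) * t := by
    rw [show γ = (γ-1)+1 by ring, rpow_add_one ht.ne']
    ring_nf
  have hAt : A * t ≤ t ^ (γ-1) * t := mul_le_mul_of_nonneg_right htA ht.le
  have hMt : M ^ γ ≤ M ^ γ * t := le_mul_of_one_le_right hMg.le ht1
  nlinarith [hlin, hsg, hAt, hMt, mul_le_mul_of_nonneg_right (le_refl (γ * M ^ (γ-1))) ht.le]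
lemma Eupper {γ M s t : ℝ} (hγ : 1 < γ) (hs : 0 < s) (hsM : s ≤ M) (ht : 0 ≤ t) :
    t ^ γ - s ^ γ - γ * s ^ (γ-1) * (t - s) ≤
      (2 ^ γ * M ^ γ + 2 ^ γ + γ * M ^ (γ-1)) * (1 + |t - s| ^ γ) := by
  have hγ0 : (0:ℝ) < γ := by linarith
  have hM : 0 < M := lt_of_lt_of_le hs hsM
  have habs : (0:ℝ) ≤ |t - s| := abs_nonneg _
  have hdγ : (0:ℝ) ≤ |t - s| ^ γ := rpow_nonneg habs _
  have hMγ : (0:ℝ) ≤ M ^ γ := rpow_nonneg hM.le _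
  have h2γ : (0:ℝ) ≤ 2 ^ γ := rpow_nonneg (by norm_num) _
  have hMγ1 : (0:ℝ) ≤ M ^ (γ-1) := rpow_nonneg hM.le _
  -- t^γ ≤ 2^γ (M^γ + |d|^γ)
  have h1 : t ^ γ ≤ 2 ^ γ * (M ^ γ + |t - s| ^ γ) := by
    have ht1 : t ≤ M + |t - s| := by
      have := le_abs_self (t - s); linarith
    have h2 : t ^ γ ≤ (M + |t - s|) ^ γ := rpow_le_rpow ht ht1 hγ0.le
    have h3 : M + |t - s| ≤ 2 * max M (|t - s|) := by
      have := le_max_left M (|t-s|); have := le_max_right M (|t-s|); linarith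
    have h4 : (M + |t - s|) ^ γ ≤ (2 * max M (|t - s|)) ^ γ :=
      rpow_le_rpow (by linarith) h3 hγ0.le
    have h5 : (2 * max M (|t - s|)) ^ γ = 2 ^ γ * (max M (|t - s|)) ^ γ :=
      mul_rpow (by norm_num) (le_max_of_le_left hM.le)
    have h6 : (max M (|t - s|)) ^ γ ≤ M ^ γ + |t - s| ^ γ := by
      rcases max_cases M (|t - s|) with ⟨he, _⟩ | ⟨he, _⟩ <;> rw [he] <;> linarith
    calc t ^ γ ≤ (M + |t-s|)^γ := h2
      _ ≤ (2 * max M (|t-s|))^γ := h4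
      _ = 2^γ * (max M (|t-s|))^γ := h5
      _ ≤ 2^γ * (M^γ + |t-s|^γ) := by
          exact mul_le_mul_of_nonneg_left h6 h2γ
  have h7 : 0 ≤ s ^ γ := rpow_nonneg hs.le _
  -- linear term
  have h8 : -(γ * s ^ (γ-1) * (t - s)) ≤ γ * M ^ (γ-1) * (1 + |t - s| ^ γ) := by
    have ha : -(γ * s ^ (γ-1) * (t - s)) ≤ γ * s ^ (γ-1) * |t - s| := by
      have h9 : -(t - s) ≤ |t - s| := neg_le_abs _
      have h10 : 0 ≤ γ * s ^ (γ-1) := mul_nonneg hγ0.le (rpow_nonneg hs.le _)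
      nlinarith
    have hb : s ^ (γ-1) ≤ M ^ (γ-1) := rpow_le_rpow hs.le hsM (by linarith)
    have hc : |t - s| ≤ 1 + |t - s| ^ γ := by
      rcases le_or_gt (|t - s|) 1 with h | h
      · linarith
      · have : |t - s| = |t - s| ^ (1:ℝ) := (rpow_one _).symm
        nth_rewrite 1 [this]
        have := rpow_le_rpow_of_exponent_le h.le hγ.le
        linarith
    have hd : γ * s ^ (γ-1) * |t - s| ≤ γ * M ^ (γ-1) * (1 + |t - s| ^ γ) := by
      have := mul_le_mul (mul_le_mul_of_nonneg_left hb hγ0.le) hc habs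
        (mul_nonneg hγ0.le hMγ1)
      linarith
    linarith
  nlinarith [h1, h7, h8, mul_nonneg (mul_nonneg h2γ hMγ) hdγ, mul_nonneg h2γ hdγ]
set_option maxHeartbeats 1000000 in
lemma entropy_lower {γ m M : ℝ} (hγ : 1 < γ) (hm : 0 < m) (hmM : m ≤ M) :
    ∃ c₃ > (0:ℝ), ∀ s t : ℝ, m ≤ s → s ≤ M → 0 ≤ t →
      (|t - s| < 1 → c₃ * (t - s)^2 ≤ t ^ γ - s ^ γ - γ * s ^ (γ-1) * (t - s)) ∧
      (1 ≤ |t - s| → c₃ * |t - s| ^ γ ≤ t ^ γ - s ^ γ - γ * s ^ (γ-1) * (t - s)) := by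
  have hγ0 : (0:ℝ) < γ := by linarith
  set κ := γ * ((γ - 1) * min ((m/2) ^ (γ - 1 - 1)) ((M + m/2) ^ (γ - 1 - 1))) / 4 with hκdef
  have hκ : 0 < κ := by
    have h1 : 0 < (m/2) ^ (γ - 1 - 1) := rpow_pos_of_pos (by linarith) _
    have h2 : 0 < (M + m/2) ^ (γ - 1 - 1) := rpow_pos_of_pos (by linarith) _
    have h3 : 0 < min ((m/2) ^ (γ - 1 - 1)) ((M + m/2) ^ (γ - 1 - 1)) := lt_min h1 h2
    rw [hκdef]
    exact div_pos (mul_pos hγ0 (mul_pos (by linarith) h3)) (by norm_num)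
  set δ := min (m/2) 1 with hδdef
  have hδ0 : 0 < δ := lt_min (by linarith) one_pos
  have hδm : δ ≤ m/2 := min_le_left _ _
  have hδ1 : δ ≤ 1 := min_le_right _ _
  set T := max (2*M + 2) ((2*(M ^ γ + γ * M ^ (γ-1))) ^ (1/(γ-1))) with hTdef
  have hT0 : 0 < T := lt_of_lt_of_le (by linarith : (0:ℝ) < 2*M+2) (le_max_left _ _)
  have hTγ : 0 < T ^ γ := rpow_pos_of_pos hT0 _
  have hMγ : 0 < M ^ γ := rpow_pos_of_pos (by linarith) _
  refine ⟨min (min (κ * δ^2) (κ * δ^2 / M ^ γ)) (min (κ * δ^2 / T ^ γ) (1/2)), ?_, ?_⟩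
  · have := sq_nonneg δ
    refine lt_min (lt_min (by positivity) (by positivity)) (lt_min (by positivity) (by norm_num))
  set c₃ := min (min (κ * δ^2) (κ * δ^2 / M ^ γ)) (min (κ * δ^2 / T ^ γ) (1/2)) with hc₃def
  have hc₃pos : 0 < c₃ := by
    refine lt_min (lt_min (by positivity) (by positivity)) (lt_min (by positivity) (by norm_num))
  have hc₃1 : c₃ ≤ κ * δ^2 := le_trans (min_le_left _ _) (min_le_left _ _)
  have hc₃M : c₃ ≤ κ * δ^2 / M ^ γ := le_trans (min_le_left _ _) (min_le_right _ _)
  have hc₃T : c₃ ≤ κ * δ^2 / T ^ γ := le_trans (min_le_right _ _) (min_le_left _ _)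
  have hc₃half : c₃ ≤ 1/2 := le_trans (min_le_right _ _) (min_le_right _ _)
  have hδsq : δ^2 ≤ 1 := by nlinarith
  have hκδκ : κ * δ^2 ≤ κ := by nlinarith
  intro s t hms hsM ht0
  have hs : 0 < s := lt_of_lt_of_le hm hms
  -- E at distance δ on either side
  have hEδr : κ * δ^2 ≤ (s+δ) ^ γ - s ^ γ - γ * s ^ (γ-1) * ((s+δ) - s) := by
    have h : κ * ((s + δ) - s)^2 ≤ (s+δ) ^ γ - s ^ γ - γ * s ^ (γ-1) * ((s+δ) - s) :=
      Estrong (m := m) (M := M) (t := s + δ) hγ hm hms hsM (by linarith) (by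
        rw [show s + δ - s = δ by ring, abs_of_pos hδ0]; exact hδm)
    have he : κ * ((s + δ) - s)^2 = κ * δ^2 := by ring
    linarith [he ▸ h]
  have hEδl : κ * δ^2 ≤ (s-δ) ^ γ - s ^ γ - γ * s ^ (γ-1) * ((s-δ) - s) := by
    have h : κ * ((s - δ) - s)^2 ≤ (s-δ) ^ γ - s ^ γ - γ * s ^ (γ-1) * ((s-δ) - s) :=
      Estrong (m := m) (M := M) (t := s - δ) hγ hm hms hsM (by linarith) (by
        rw [show s - δ - s = -δ by ring, abs_neg, abs_of_pos hδ0]; exact hδm)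
    have he : κ * ((s - δ) - s)^2 = κ * δ^2 := by ring
    linarith [he ▸ h]
  constructor
  · -- small deviation
    intro hlt
    rcases le_or_gt |t - s| δ with hle | hgt
    · have h : κ * (t - s)^2 ≤ t ^ γ - s ^ γ - γ * s ^ (γ-1) * (t - s) :=
        Estrong (m := m) (M := M) hγ hm hms hsM ht0 (le_trans hle hδm)
      have : c₃ * (t-s)^2 ≤ κ * (t-s)^2 :=
        mul_le_mul_of_nonneg_right (le_trans hc₃1 hκδκ) (sq_nonneg _)
      linarith
    · have hd2 : (t-s)^2 ≤ 1 := by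
        have h5 : |t - s|^2 ≤ 1 := by nlinarith [abs_nonneg (t-s)]
        rwa [sq_abs] at h5
      have hEb : κ * δ^2 ≤ t ^ γ - s ^ γ - γ * s ^ (γ-1) * (t - s) := by
        rcases le_total s t with hst | hts
        · have : s + δ ≤ t := by
            rw [abs_of_nonneg (by linarith)] at hgt; linarith
          exact le_trans hEδr (Emono_right hγ hs (by linarith) this)
        · have : t ≤ s - δ := by
            rw [abs_of_nonpos (by linarith)] at hgt; linarith
          exact le_trans hEδl (Emono_left hγ hs ht0 this (by linarith))
      have : c₃ * (t-s)^2 ≤ c₃ * 1 := mul_le_mul_of_nonneg_left hd2 hc₃pos.le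
      linarith
  · -- large deviation
    intro hge
    have habsnn : (0:ℝ) ≤ |t - s| := abs_nonneg _
    rcases le_total s t with hst | hts
    · have habs : |t - s| = t - s := abs_of_nonneg (by linarith)
      have htδ : s + δ ≤ t := by rw [habs] at hge; linarith
      have hEb : κ * δ^2 ≤ t ^ γ - s ^ γ - γ * s ^ (γ-1) * (t - s) :=
        le_trans hEδr (Emono_right hγ hs (by linarith) htδ)
      rcases le_total t T with htT | hTt
      · have hdT : |t - s| ≤ T := by rw [habs]; linarith
        have : |t - s| ^ γ ≤ T ^ γ := rpow_le_rpow habsnn hdT hγ0.le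
        have hch : c₃ * |t - s| ^ γ ≤ (κ * δ^2 / T ^ γ) * T ^ γ := by
          calc c₃ * |t - s| ^ γ ≤ (κ * δ^2 / T ^ γ) * |t - s| ^ γ :=
                mul_le_mul_of_nonneg_right hc₃T (rpow_nonneg habsnn _)
            _ ≤ (κ * δ^2 / T ^ γ) * T ^ γ :=
                mul_le_mul_of_nonneg_left this (by positivity)
        rw [div_mul_cancel₀ _ hTγ.ne'] at hch
        linarith
      · have h := Egrowth (M := M) hγ hs hsM (le_trans (le_max_left _ _) hTt)
          (le_trans (le_max_right _ _) hTt)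
        have : |t - s| ^ γ ≤ t ^ γ := rpow_le_rpow habsnn (by rw [habs]; linarith) hγ0.le
        have : c₃ * |t - s| ^ γ ≤ (1/2) * t ^ γ := by
          calc c₃ * |t - s| ^ γ ≤ (1/2) * |t - s| ^ γ :=
                mul_le_mul_of_nonneg_right hc₃half (rpow_nonneg habsnn _)
            _ ≤ (1/2) * t ^ γ := by linarith [rpow_nonneg habsnn γ]
        linarith
    · have habs : |t - s| = s - t := abs_of_nonpos (by linarith) |>.trans (by ring)
      have htδ : t ≤ s - δ := by rw [habs] at hge; linarith
      have hEb : κ * δ^2 ≤ t ^ γ - s ^ γ - γ * s ^ (γ-1) * (t - s) :=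
        le_trans hEδl (Emono_left hγ hs ht0 htδ (by linarith))
      have hdM : |t - s| ≤ M := by rw [habs]; linarith
      have : |t - s| ^ γ ≤ M ^ γ := rpow_le_rpow habsnn hdM hγ0.le
      have hch : c₃ * |t - s| ^ γ ≤ (κ * δ^2 / M ^ γ) * M ^ γ := by
        calc c₃ * |t - s| ^ γ ≤ (κ * δ^2 / M ^ γ) * |t - s| ^ γ :=
              mul_le_mul_of_nonneg_right hc₃M (rpow_nonneg habsnn _)
          _ ≤ (κ * δ^2 / M ^ γ) * M ^ γ :=
              mul_le_mul_of_nonneg_left this (by positivity)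
      rw [div_mul_cancel₀ _ hMγ.ne'] at hch
      linarith
open MeasureTheory

set_option maxHeartbeats 1600000 in
theorem Lgamma_le_integral_relative_entropy (Ω : Set (EuclideanSpace ℝ (Fin 3)))
    (hΩm : MeasurableSet Ω) (hΩb : Bornology.IsBounded Ω)
    (γ : ℝ) (hγ : 1 < γ) (K : Set ℝ) (hK : IsCompact K) (hK' : K ⊆ Set.Ioi (0 : ℝ)) :
    ∃ c₅ > (0 : ℝ), ∀ ϱ r : EuclideanSpace ℝ (Fin 3) → ℝ,
      Measurable ϱ → Measurable r → (∀ x, 0 ≤ ϱ x) → (∀ x, r x ∈ K) →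
      (∫ x in Ω, |ϱ x - r x| ^ γ)
        ≤ c₅ * ((∫ x in Ω, (ϱ x ^ γ / (γ - 1) - r x ^ γ / (γ - 1)
              - (γ * r x ^ (γ - 1) / (γ - 1)) * (ϱ x - r x))) ^ (γ / 2))
          + c₅ * (∫ x in Ω, (ϱ x ^ γ / (γ - 1) - r x ^ γ / (γ - 1)
              - (γ * r x ^ (γ - 1) / (γ - 1)) * (ϱ x - r x))) := by
  have hγ1 : (0:ℝ) < γ - 1 := by linarith
  have hγ0 : (0:ℝ) < γ := by linarith
  rcases K.eq_empty_or_nonempty with hKe | hKne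
  · refine ⟨1, one_pos, fun ϱ r hϱ hr hϱ0 hrK => ?_⟩
    have := hrK 0
    rw [hKe] at this
    exact absurd this (Set.notMem_empty _)
  set m := sInf K with hmdef
  set M := sSup K with hMdef
  have hmK : m ∈ K := hK.sInf_mem hKne
  have hm : 0 < m := hK' hmK
  have hmM : m ≤ M := le_csSup hK.bddAbove hmK
  obtain ⟨c₃, hc₃, hEnt⟩ := entropy_lower (γ := γ) (m := m) (M := M) hγ hm hmM
  set c₄ := c₃ / (γ - 1) with hc₄def
  have hc₄ : 0 < c₄ := div_pos hc₃ hγ1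
  set Cup := (2 ^ γ * M ^ γ + 2 ^ γ + γ * M ^ (γ-1)) / (γ - 1) with hCdef
  have hμΩ : volume Ω < ⊤ := hΩb.measure_lt_top
  set B := (volume Ω).toReal + 1 with hBdef
  have htRnn : (0:ℝ) ≤ (volume Ω).toReal := ENNReal.toReal_nonneg
  have hB : 0 < B := by rw [hBdef]; linarith
  have hc₄γ : (0:ℝ) < c₄ ^ (γ/2) := Real.rpow_pos_of_pos hc₄ _
  refine ⟨B / c₄ ^ (γ/2) + 2 / c₄, by positivity, fun ϱ r hϱ hr hϱ0 hrK => ?_⟩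
  set c₅ := B / c₄ ^ (γ/2) + 2 / c₄ with hc₅def
  have hc₅ : 0 < c₅ := by rw [hc₅def]; positivity
  have hrm : ∀ x, m ≤ r x := fun x => csInf_le hK.bddBelow (hrK x)
  have hrM : ∀ x, r x ≤ M := fun x => le_csSup hK.bddAbove (hrK x)
  have hr0 : ∀ x, 0 < r x := fun x => hK' (hrK x)
  clear_value m M c₄ Cup B c₅
  set F := fun x : EuclideanSpace ℝ (Fin 3) => ϱ x ^ γ / (γ - 1) - r x ^ γ / (γ - 1)
      - (γ * r x ^ (γ - 1) / (γ - 1)) * (ϱ x - r x) with hFdef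
  have hFeq : ∀ x, F x = (ϱ x ^ γ - r x ^ γ - γ * r x ^ (γ-1) * (ϱ x - r x)) / (γ - 1) := by
    intro x; rw [hFdef]; ring
  have hFnn : ∀ x, 0 ≤ F x := by
    intro x
    rw [hFeq x]
    apply div_nonneg _ hγ1.le
    have := tangent_le_rpow (hϱ0 x) (hr0 x) hγ.le
    linarith
  have hless : ∀ x, |ϱ x - r x| < 1 → c₄ * (ϱ x - r x)^2 ≤ F x := by
    intro x h
    have h2 := (hEnt (r x) (ϱ x) (hrm x) (hrM x) (hϱ0 x)).1 h
    rw [hFeq x, hc₄def]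
    calc c₃ / (γ-1) * (ϱ x - r x)^2 = (c₃ * (ϱ x - r x)^2) / (γ-1) := by ring
      _ ≤ _ := by gcongr
  have hgea : ∀ x, 1 ≤ |ϱ x - r x| → c₄ * |ϱ x - r x| ^ γ ≤ F x := by
    intro x h
    have h2 := (hEnt (r x) (ϱ x) (hrm x) (hrM x) (hϱ0 x)).2 h
    rw [hFeq x, hc₄def]
    calc c₃ / (γ-1) * |ϱ x - r x| ^ γ = (c₃ * |ϱ x - r x| ^ γ) / (γ-1) := by ring
      _ ≤ _ := by gcongr
  have hFub : ∀ x, F x ≤ Cup * (1 + |ϱ x - r x| ^ γ) := by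
    intro x
    have h2 := Eupper (M := M) hγ (hr0 x) (hrM x) (hϱ0 x)
    rw [hFeq x, hCdef]
    calc (ϱ x ^ γ - r x ^ γ - γ * r x ^ (γ-1) * (ϱ x - r x)) / (γ-1)
        ≤ ((2 ^ γ * M ^ γ + 2 ^ γ + γ * M ^ (γ-1)) * (1 + |ϱ x - r x| ^ γ)) / (γ-1) := by gcongr
      _ = _ := by ring
  -- measurability
  have hdm : Measurable fun x => ϱ x - r x := hϱ.sub hr
  have hgm : Measurable fun x => |ϱ x - r x| ^ γ := by fun_prop
  have hFm : Measurable F := by rw [hFdef]; fun_prop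
  clear_value F
  set I := ∫ x in Ω, F x with hIdef
  have hInn : 0 ≤ I := setIntegral_nonneg hΩm fun x _ => hFnn x
  have hIγnn : 0 ≤ I ^ (γ/2) := Real.rpow_nonneg hInn _
  by_cases hInt : IntegrableOn (fun x => |ϱ x - r x| ^ γ) Ω volume
  swap
  · rw [integral_undef hInt]
    have h1 : 0 ≤ c₅ * I ^ (γ/2) := mul_nonneg hc₅.le hIγnn
    have h2 : 0 ≤ c₅ * I := mul_nonneg hc₅.le hInn
    exact add_nonneg h1 h2
  -- F is integrable on Ω
  have hIntF : IntegrableOn F Ω := by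
    have hb : IntegrableOn (fun x => Cup * (1 + |ϱ x - r x| ^ γ)) Ω volume :=
      (((integrableOn_const hμΩ.ne).add hInt).const_mul Cup)
    exact hb.mono' hFm.aestronglyMeasurable (Filter.Eventually.of_forall fun x => by
      rw [Real.norm_eq_abs, abs_of_nonneg (hFnn x)]; exact hFub x)
  set S := {x : EuclideanSpace ℝ (Fin 3) | |ϱ x - r x| < 1} with hSdef
  have hSm : MeasurableSet S := measurableSet_lt hdm.abs measurable_const
  have hsplit := integral_inter_add_diff (f := fun x => |ϱ x - r x| ^ γ) (μ := volume)
    (s := Ω) hSm hInt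
  -- the part with large deviation
  have hFsub : ∀ (A : Set (EuclideanSpace ℝ (Fin 3))), A ⊆ Ω → (∫ x in A, F x) ≤ I := by
    intro A hA
    exact setIntegral_mono_set hIntF (Filter.Eventually.of_forall fun x => hFnn x)
      (HasSubset.Subset.eventuallyLE hA)
  clear_value I
  have hbig : ∫ x in Ω \ S, |ϱ x - r x| ^ γ ≤ I / c₄ := by
    have h1 : ∫ x in Ω \ S, c₄ * |ϱ x - r x| ^ γ ≤ ∫ x in Ω \ S, F x := by
      apply setIntegral_mono_on ((hInt.mono_set Set.diff_subset).const_mul c₄)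
        (hIntF.mono_set Set.diff_subset) (hΩm.diff hSm)
      intro x hx
      exact hgea x (not_lt.mp hx.2)
    rw [integral_const_mul] at h1
    have h2 := hFsub (Ω \ S) Set.diff_subset
    rw [le_div_iff₀ hc₄, mul_comm]
    linarith
  -- the small-deviation part
  have hΩSm : MeasurableSet (Ω ∩ S) := hΩm.inter hSm
  have hμΩS : volume (Ω ∩ S) < ⊤ := lt_of_le_of_lt (measure_mono Set.inter_subset_left) hμΩ
  have hIntSq : IntegrableOn (fun x => (ϱ x - r x)^2) (Ω ∩ S) volume := by
    have hone : IntegrableOn (fun _ => (1:ℝ)) (Ω ∩ S) volume := integrableOn_const hμΩS.ne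
    apply Integrable.mono' hone ((hdm.pow_const 2).aestronglyMeasurable)
    rw [ae_restrict_iff' hΩSm]
    apply Filter.Eventually.of_forall
    intro x hx
    have h1 : |ϱ x - r x| < 1 := hx.2
    rw [Real.norm_eq_abs, abs_of_nonneg (sq_nonneg _), ← sq_abs]
    nlinarith [abs_nonneg (ϱ x - r x)]
  set J := ∫ x in Ω ∩ S, (ϱ x - r x)^2 with hJdef
  have hJnn : 0 ≤ J := setIntegral_nonneg hΩSm fun x _ => sq_nonneg _
  have hJI : c₄ * J ≤ I := by
    have h1 : ∫ x in Ω ∩ S, c₄ * (ϱ x - r x)^2 ≤ ∫ x in Ω ∩ S, F x := by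
      apply setIntegral_mono_on (hIntSq.const_mul c₄) (hIntF.mono_set Set.inter_subset_left) hΩSm
      intro x hx
      exact hless x hx.2
    rw [integral_const_mul] at h1
    have h2 := hFsub (Ω ∩ S) Set.inter_subset_left
    linarith
  have hJle : J ≤ I / c₄ := (le_div_iff₀ hc₄).mpr (by linarith)
  have hIc₄nn : 0 ≤ I / c₄ := div_nonneg hInn hc₄.le
  have hsmall : ∫ x in Ω ∩ S, |ϱ x - r x| ^ γ ≤ B * (I / c₄) ^ (γ/2) + I / c₄ := by
    have hBIγ : 0 ≤ B * (I / c₄) ^ (γ/2) := mul_nonneg hB.le (Real.rpow_nonneg hIc₄nn _)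
    rcases le_or_gt γ 2 with hγ2 | hγ2
    · -- subquadratic case: Chebyshev splitting at level √J
      rcases eq_or_lt_of_le hJnn with hJ0 | hJpos
      · -- J = 0 : deviation vanishes a.e. on Ω ∩ S
        have hz : (fun x => (ϱ x - r x)^2) =ᶠ[ae (volume.restrict (Ω ∩ S))] 0 :=
          (integral_eq_zero_iff_of_nonneg (fun x => sq_nonneg _) hIntSq).mp hJ0.symm
        have hz2 : (fun x => |ϱ x - r x| ^ γ) =ᶠ[ae (volume.restrict (Ω ∩ S))] 0 := by
          filter_upwards [hz] with x hx
          have : ϱ x - r x = 0 := by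
            have := sq_eq_zero_iff.mp hx
            exact this
          simp only [this, abs_zero]
          exact Real.zero_rpow hγ0.ne'
        have hzero : ∫ x in Ω ∩ S, |ϱ x - r x| ^ γ = 0 := by
          rw [integral_congr_ae hz2]; simp
        rw [hzero]
        linarith
      · set lam := Real.sqrt J with hlamdef
        have hlam : 0 < lam := Real.sqrt_pos.mpr hJpos
        have hlamrpow : lam = J ^ ((1:ℝ)/2) := Real.sqrt_eq_rpow J
        set S' := {x : EuclideanSpace ℝ (Fin 3) | |ϱ x - r x| < lam} with hS'def
        have hS'm : MeasurableSet S' := measurableSet_lt hdm.abs measurable_const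
        have hsplit2 := integral_inter_add_diff (f := fun x => |ϱ x - r x| ^ γ) (μ := volume)
          (s := Ω ∩ S) hS'm (hInt.mono_set Set.inter_subset_left)
        have hlamγ : lam ^ γ = J ^ (γ/2) := by
          rw [hlamrpow, ← Real.rpow_mul hJnn, show (1:ℝ)/2*γ = γ/2 by ring]
        have hpiece1 : ∫ x in (Ω ∩ S) ∩ S', |ϱ x - r x| ^ γ ≤ (volume Ω).toReal * J ^ (γ/2) := by
          have h1 : ∫ x in (Ω ∩ S) ∩ S', |ϱ x - r x| ^ γ ≤ ∫ _x in (Ω ∩ S) ∩ S', lam ^ γ := by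
            apply setIntegral_mono_on
              (hInt.mono_set (Set.inter_subset_left.trans Set.inter_subset_left))
              (integrableOn_const ((lt_of_le_of_lt
                (measure_mono (Set.inter_subset_left.trans Set.inter_subset_left)) hμΩ).ne))
              (hΩSm.inter hS'm)
            intro x hx
            exact Real.rpow_le_rpow (abs_nonneg _) (le_of_lt hx.2) hγ0.le
          rw [setIntegral_const, smul_eq_mul] at h1
          have h2 : (volume ((Ω ∩ S) ∩ S')).toReal ≤ (volume Ω).toReal :=
            ENNReal.toReal_mono hμΩ.ne (measure_mono (Set.inter_subset_left.trans Set.inter_subset_left))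
          have h3 : 0 ≤ lam ^ γ := Real.rpow_nonneg hlam.le _
          calc ∫ x in (Ω ∩ S) ∩ S', |ϱ x - r x| ^ γ ≤ (volume ((Ω ∩ S) ∩ S')).toReal * lam ^ γ := h1
            _ ≤ (volume Ω).toReal * lam ^ γ := mul_le_mul_of_nonneg_right h2 h3
            _ = (volume Ω).toReal * J ^ (γ/2) := by rw [hlamγ]
        have hpiece2 : ∫ x in (Ω ∩ S) \ S', |ϱ x - r x| ^ γ ≤ J ^ (γ/2) := by
          have hpt : ∀ x ∈ (Ω ∩ S) \ S', |ϱ x - r x| ^ γ ≤ lam ^ (γ - 2) * (ϱ x - r x)^2 := by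
            intro x hx
            have hge : lam ≤ |ϱ x - r x| := not_lt.mp hx.2
            have hpos : 0 < |ϱ x - r x| := lt_of_lt_of_le hlam hge
            have he : |ϱ x - r x| ^ γ = |ϱ x - r x| ^ (γ - 2) * (ϱ x - r x)^2 := by
              have h2 : |ϱ x - r x| ^ ((2:ℕ):ℝ) = (ϱ x - r x)^2 := by
                rw [Real.rpow_natCast, sq_abs]
              rw [← h2, ← Real.rpow_add hpos]
              norm_num
            rw [he]
            apply mul_le_mul_of_nonneg_right _ (sq_nonneg _)
            exact Real.rpow_le_rpow_of_nonpos hlam hge (by linarith)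
          have h1 : ∫ x in (Ω ∩ S) \ S', |ϱ x - r x| ^ γ
              ≤ ∫ x in (Ω ∩ S) \ S', lam ^ (γ-2) * (ϱ x - r x)^2 := by
            apply setIntegral_mono_on
              (hInt.mono_set (Set.diff_subset.trans Set.inter_subset_left))
              ((hIntSq.mono_set Set.diff_subset).const_mul _) (hΩSm.diff hS'm) hpt
          rw [integral_const_mul] at h1
          have h2 : ∫ x in (Ω ∩ S) \ S', (ϱ x - r x)^2 ≤ J :=
            setIntegral_mono_set hIntSq (Filter.Eventually.of_forall fun x => sq_nonneg _)
              (HasSubset.Subset.eventuallyLE Set.diff_subset)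
          have h3 : 0 ≤ lam ^ (γ - 2) := Real.rpow_nonneg hlam.le _
          have h4 : lam ^ (γ-2) * J = J ^ (γ/2) := by
            rw [hlamrpow, ← Real.rpow_mul hJnn]
            nth_rewrite 2 [show J = J ^ (1:ℝ) from (Real.rpow_one J).symm]
            rw [← Real.rpow_add hJpos, show (1:ℝ)/2*(γ-2)+1 = γ/2 by ring]
          calc ∫ x in (Ω ∩ S) \ S', |ϱ x - r x| ^ γ ≤ lam ^ (γ-2) * ∫ x in (Ω ∩ S) \ S', (ϱ x - r x)^2 := h1
            _ ≤ lam ^ (γ-2) * J := mul_le_mul_of_nonneg_left h2 h3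
            _ = J ^ (γ/2) := h4
        have hJγle : J ^ (γ/2) ≤ (I / c₄) ^ (γ/2) :=
          Real.rpow_le_rpow hJnn hJle (by linarith)
        have : ∫ x in Ω ∩ S, |ϱ x - r x| ^ γ ≤ B * J ^ (γ/2) := by
          rw [← hsplit2, hBdef]
          linarith [hpiece1, hpiece2]
        calc ∫ x in Ω ∩ S, |ϱ x - r x| ^ γ ≤ B * J ^ (γ/2) := this
          _ ≤ B * (I / c₄) ^ (γ/2) := mul_le_mul_of_nonneg_left hJγle hB.le
          _ ≤ B * (I / c₄) ^ (γ/2) + I / c₄ := by linarith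
    · -- supquadratic case: |d|^γ ≤ d² on S
      have h1 : ∫ x in Ω ∩ S, |ϱ x - r x| ^ γ ≤ J := by
        apply setIntegral_mono_on (hInt.mono_set Set.inter_subset_left) hIntSq hΩSm
        intro x hx
        have hx1 : |ϱ x - r x| < 1 := hx.2
        rcases eq_or_lt_of_le (abs_nonneg (ϱ x - r x)) with h0 | hpos
        · rw [← h0, Real.zero_rpow hγ0.ne']
          exact sq_nonneg _
        · have := Real.rpow_le_rpow_of_exponent_ge hpos hx1.le (by linarith : (2:ℝ) ≤ γ)
          have h2 : |ϱ x - r x| ^ ((2:ℕ):ℝ) = (ϱ x - r x)^2 := by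
            rw [Real.rpow_natCast, sq_abs]
          rw [show ((2:ℕ):ℝ) = (2:ℝ) by norm_num] at h2
          rw [← h2]
          exact this
      linarith
  -- combine
  rw [← hsplit]
  have hc₅1 : B / c₄ ^ (γ/2) ≤ c₅ := by
    rw [hc₅def]
    have : 0 < 2 / c₄ := by positivity
    linarith
  have hc₅2 : 2 / c₄ ≤ c₅ := by
    rw [hc₅def]
    have : 0 < B / c₄ ^ (γ/2) := by positivity
    linarith
  have hdivpow : (I / c₄) ^ (γ/2) = I ^ (γ/2) / c₄ ^ (γ/2) := Real.div_rpow hInn hc₄.le _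
  have h1 : B * (I / c₄) ^ (γ/2) ≤ c₅ * I ^ (γ/2) := by
    rw [hdivpow]
    calc B * (I ^ (γ/2) / c₄ ^ (γ/2)) = (B / c₄ ^ (γ/2)) * I ^ (γ/2) := by ring
      _ ≤ c₅ * I ^ (γ/2) := mul_le_mul_of_nonneg_right hc₅1 hIγnn
  have h2 : 2 * (I / c₄) ≤ c₅ * I := by
    calc 2 * (I / c₄) = (2 / c₄) * I := by ring
      _ ≤ c₅ * I := mul_le_mul_of_nonneg_right hc₅2 hInn
  linarith [hsmall, hbig]
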